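/- Under the nondegeneracy and boundedness assumptions, for every Θ ∈ ℝ^{n×d}, the suboptimality loss satisfies l_sub(Θ) ≤ E[ l(D; Θ) ], where l_sub(Θ) = E[ ĉ^T x* − ĉ^T x̂ ] with ĉ = Θ z, x* the optimal solution of LP(c, A, b), x̂ an optimal solution of LP(ĉ, A, b), and the expectations are over D = (c, A, b, z) ~ P. -/

import Mathlib

open MeasureTheory Matrix Finset

namespace MOMPaper

variable {n m d : ℕ}

/-- A point is feasible for the standard-form LP min cᵀx s.t. Ax = b, x ≥ 0. -/
def Feasible (A : Matrix (Fin m) (Fin n) ℝ) (b : Fin m → ℝ) (x : Fin n → ℝ) : Prop :=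
  A.mulVec x = b ∧ ∀ i, 0 ≤ x i

/-- x is an optimal solution of LP(c,A,b). -/
def IsOptimal (c : Fin n → ℝ) (A : Matrix (Fin m) (Fin n) ℝ) (b : Fin m → ℝ)
    (x : Fin n → ℝ) : Prop :=
  Feasible A b x ∧ ∀ y, Feasible A b y → c ⬝ᵥ x ≤ c ⬝ᵥ y

/-- Column submatrix A_B, where the basis B is given by an enumeration β : Fin m → Fin n. -/
def subCols (A : Matrix (Fin m) (Fin n) ℝ) (β : Fin m → Fin n) : Matrix (Fin m) (Fin m) ℝ :=
  A.submatrix id β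

/-- Reduced cost vector r = c − Aᵀ (A_B⁻¹)ᵀ c_B. -/
noncomputable def reducedCost (c : Fin n → ℝ) (A : Matrix (Fin m) (Fin n) ℝ)
    (β : Fin m → Fin n) : Fin n → ℝ :=
  c - (Aᵀ).mulVec ((((subCols A β)⁻¹)ᵀ).mulVec (c ∘ β))

/-- Euclidean norm of a vector. -/
noncomputable def l2norm {ι : Type*} [Fintype ι] (x : ι → ℝ) : ℝ :=
  Real.sqrt (∑ i, x i ^ 2)

/-- Frobenius norm of a matrix. -/
noncomputable def frob {ι κ : Type*} [Fintype ι] [Fintype κ] (M : Matrix ι κ ℝ) : ℝ :=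
  Real.sqrt (∑ i, ∑ j, M i j ^ 2)

/-- Largest singular value of a square matrix, i.e. its ℓ²-operator norm. -/
noncomputable def sigmaMax {ι : Type*} [Fintype ι] [DecidableEq ι]
    (M : Matrix ι ι ℝ) : ℝ :=
  ‖Matrix.toEuclideanCLM (𝕜 := ℝ) M‖

/-- A data sample D = (c, A, b, z). -/
abbrev Samp (n m d : ℕ) : Type :=
  (Fin n → ℝ) × (Fin m → Fin n → ℝ) × (Fin m → ℝ) × (Fin d → ℝ)

def cOf (D : Samp n m d) : Fin n → ℝ := D.1
def AOf (D : Samp n m d) : Matrix (Fin m) (Fin n) ℝ := Matrix.of D.2.1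
def bOf (D : Samp n m d) : Fin m → ℝ := D.2.2.1
def zOf (D : Samp n m d) : Fin d → ℝ := D.2.2.2

/-- Indices of positive coordinates: the optimal basis B* of x*. -/
noncomputable def posSupport (x : Fin n → ℝ) : Finset (Fin n) :=
  Finset.univ.filter (fun i => 0 < x i)

/-- Canonical (increasing) enumeration of a finset of cardinality m. -/
noncomputable def enumOf [NeZero n] (B : Finset (Fin n)) : Fin m → Fin n :=
  if h : B.card = m then B.orderEmbOfFin h else
    fun _ => ⟨0, Nat.pos_of_ne_zero (NeZero.ne n)⟩

/-- Nondegeneracy of the sample D, whose unique optimal solution is xs. -/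
def Nondeg (D : Samp n m d) (xs : Fin n → ℝ) : Prop :=
  IsOptimal (cOf D) (AOf D) (bOf D) xs ∧
  (∀ y, IsOptimal (cOf D) (AOf D) (bOf D) y → y = xs) ∧
  (∀ γ : Fin m → Fin n, Function.Injective γ → IsUnit (subCols (AOf D) γ).det) ∧
  (posSupport xs).card = m

/-- Boundedness of the sample D (with optimal solution xs), with constant σ̄. -/
noncomputable def BoundedD [NeZero n] (σb : ℝ) (D : Samp n m d) (xs : Fin n → ℝ) : Prop :=
  sigmaMax ((subCols (AOf D) (enumOf (posSupport xs)))⁻¹) ≤ σb ∧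
  l2norm (zOf D) ≤ 1 ∧
  (∀ i j, |AOf D i j| ≤ 1) ∧ (∀ i, |bOf D i| ≤ 1) ∧ (∀ i, |cOf D i| ≤ 1) ∧
  (∀ x, Feasible (AOf D) (bOf D) x → l2norm x ≤ 1)

/-- Margin-violation loss l(D;Θ) = Σ_{i ∈ N*} max(1 − r̂_i, 0), where r̂ is the
    reduced cost of ĉ = Θz at the optimal basis B* of xs. -/
noncomputable def mloss [NeZero n] (Θ : Matrix (Fin n) (Fin d) ℝ) (D : Samp n m d)
    (xs : Fin n → ℝ) : ℝ :=
  ∑ i ∈ Finset.univ \ posSupport xs,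
    max (1 - reducedCost (Θ.mulVec (zOf D)) (AOf D) (enumOf (posSupport xs)) i) 0

/-- The MOM objective (λ/2)‖Θ‖_F² + (1/T) Σ_t l(D_t;Θ). -/
noncomputable def momObj [NeZero n] (lam : ℝ) (T : ℕ) (Ds : Fin T → Samp n m d)
    (xstar : Samp n m d → Fin n → ℝ) (Θ : Matrix (Fin n) (Fin d) ℝ) : ℝ :=
  lam / 2 * (frob Θ) ^ 2 + (1 / (T : ℝ)) * ∑ t, mloss Θ (Ds t) (xstar (Ds t))

/-- The event (on a new sample D) that xs(D) is the unique optimal solution of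
    LP(ĉ, A, b) with predicted objective ĉ = Θ z, i.e. "x*_new = x̂_new". -/
def PredictsOpt (Θ : Matrix (Fin n) (Fin d) ℝ) (D : Samp n m d) (xs : Fin n → ℝ) : Prop :=
  IsOptimal (Θ.mulVec (zOf D)) (AOf D) (bOf D) xs ∧
  ∀ y, IsOptimal (Θ.mulVec (zOf D)) (AOf D) (bOf D) y → y = xs


/-! ### Auxiliary lemmas -/

lemma reducedCost_dot (c : Fin n → ℝ) (A : Matrix (Fin m) (Fin n) ℝ) (β : Fin m → Fin n)
    {b : Fin m → ℝ} {x : Fin n → ℝ} (hx : A.mulVec x = b) :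
    reducedCost c A β ⬝ᵥ x = c ⬝ᵥ x - ((((subCols A β)⁻¹)ᵀ).mulVec (c ∘ β)) ⬝ᵥ b := by
  unfold reducedCost
  rw [sub_dotProduct]
  congr 1
  rw [Matrix.mulVec_transpose, ← Matrix.dotProduct_mulVec, hx]

lemma reducedCost_basis {A : Matrix (Fin m) (Fin n) ℝ} {β : Fin m → Fin n}
    (h : IsUnit (subCols A β).det) (c : Fin n → ℝ) (j : Fin m) :
    reducedCost c A β (β j) = 0 := by
  have key : ((Aᵀ).mulVec ((((subCols A β)⁻¹)ᵀ).mulVec (c ∘ β))) (β j) = (c ∘ β) j := by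
    have h1 : ((Aᵀ).mulVec ((((subCols A β)⁻¹)ᵀ).mulVec (c ∘ β))) (β j)
        = (((subCols A β)ᵀ).mulVec ((((subCols A β)⁻¹)ᵀ).mulVec (c ∘ β))) j := by
      simp [Matrix.mulVec, dotProduct, subCols, Matrix.transpose, Matrix.submatrix]
    rw [h1, Matrix.mulVec_mulVec, ← Matrix.transpose_mul, Matrix.nonsing_inv_mul _ h,
      Matrix.transpose_one, Matrix.one_mulVec]
  show c (β j) - _ = 0
  rw [key]
  simp

/-- Sufficiency: if x is feasible, supported on the range of β, and all reduced costs
are nonnegative, then x is optimal. -/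
lemma optimal_of_reducedCost_nonneg {c : Fin n → ℝ} {A : Matrix (Fin m) (Fin n) ℝ}
    {b : Fin m → ℝ} {β : Fin m → Fin n} {x : Fin n → ℝ}
    (hdet : IsUnit (subCols A β).det)
    (hx : Feasible A b x)
    (hsupp : ∀ i, (∀ j, β j ≠ i) → x i = 0)
    (hr : ∀ i, 0 ≤ reducedCost c A β i) :
    IsOptimal c A b x := by
  refine ⟨hx, fun y hy => ?_⟩
  have hxd := reducedCost_dot c A β hx.1
  have hyd := reducedCost_dot c A β hy.1
  have hx0 : reducedCost c A β ⬝ᵥ x = 0 := by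
    unfold dotProduct
    apply Finset.sum_eq_zero
    intro i _
    by_cases hmem : ∃ j, β j = i
    · obtain ⟨j, rfl⟩ := hmem
      rw [reducedCost_basis hdet, zero_mul]
    · push_neg at hmem
      rw [hsupp i hmem, mul_zero]
  have hy0 : 0 ≤ reducedCost c A β ⬝ᵥ y :=
    Finset.sum_nonneg fun i _ => mul_nonneg (hr i) (hy.2 i)
  linarith

/-- Necessity: at a nondegenerate optimal basic solution, reduced costs are nonnegative. -/
lemma reducedCost_nonneg_of_optimal {c : Fin n → ℝ} {A : Matrix (Fin m) (Fin n) ℝ}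
    {b : Fin m → ℝ} {β : Fin m → Fin n} {x : Fin n → ℝ}
    (hdet : IsUnit (subCols A β).det)
    (hβ : Function.Injective β)
    (hopt : IsOptimal c A b x)
    (hsupp : ∀ i, (∀ j, β j ≠ i) → x i = 0)
    (hpos : ∀ j, 0 < x (β j)) :
    ∀ i, 0 ≤ reducedCost c A β i := by
  intro i
  by_cases hmem : ∃ j, β j = i
  · obtain ⟨j, rfl⟩ := hmem
    exact (reducedCost_basis hdet c j).ge
  push_neg at hmem
  by_contra hneg
  push_neg at hneg
  -- direction w
  set u : Fin m → ℝ := ((subCols A β)⁻¹).mulVec (fun j => A j i) with hu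
  set w : Fin n → ℝ := fun k => (if k = i then 1 else 0) - ∑ j, (if β j = k then u j else 0) with hw
  have hAw : A.mulVec w = 0 := by
    funext r
    have h1 : A.mulVec (fun k => if k = i then (1:ℝ) else 0) = fun r => A r i := by
      funext r
      simp [Matrix.mulVec, dotProduct]
    have h2 : A.mulVec (fun k => ∑ j, (if β j = k then u j else 0)) = (subCols A β).mulVec u := by
      funext r
      simp only [Matrix.mulVec, dotProduct, Finset.mul_sum, mul_ite, mul_zero]
      rw [Finset.sum_comm]
      simp [subCols, Finset.sum_ite_eq, Matrix.submatrix_apply]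
    have h3 : (subCols A β).mulVec u = fun r => A r i := by
      rw [hu, Matrix.mulVec_mulVec, Matrix.mul_nonsing_inv _ hdet, Matrix.one_mulVec]
    have : A.mulVec w = A.mulVec (fun k => if k = i then (1:ℝ) else 0)
        - A.mulVec (fun k => ∑ j, (if β j = k then u j else 0)) := by
      rw [← Matrix.mulVec_sub]
      rfl
    rw [this, h1, h2, h3]
    simp
  have hcw : c ⬝ᵥ w = reducedCost c A β i := by
    have hsplit : c ⬝ᵥ w = c i - ∑ j, c (β j) * u j := by
      simp only [hw, dotProduct, mul_sub, Finset.sum_sub_distrib, Finset.mul_sum,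
        mul_ite, mul_zero, mul_one]
      congr 1
      · rw [Finset.sum_ite_eq' Finset.univ i c]
        simp
      · rw [Finset.sum_comm]
        simp [Finset.sum_ite_eq]
    rw [hsplit]
    unfold reducedCost
    simp only [Pi.sub_apply]
    congr 1
    -- ∑ j, c (β j) * u j = (Aᵀ *ᵥ ((M⁻¹)ᵀ *ᵥ c∘β)) i
    simp only [Matrix.mulVec, dotProduct, Matrix.transpose_apply, hu,
      Finset.mul_sum]
    rw [Finset.sum_comm]
    refine Finset.sum_congr rfl fun k _ => Finset.sum_congr rfl fun j _ => by
      simp only [Function.comp_apply]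
      ring
  -- step size
  set s : Finset ℝ := insert 1 (Finset.image (fun j => x (β j) / (1 + |u j|)) Finset.univ) with hs
  have hsne : s.Nonempty := ⟨1, by simp [hs]⟩
  set ε : ℝ := s.min' hsne with hε
  have hεpos : 0 < ε := by
    apply (Finset.lt_min'_iff s hsne).2
    intro y hy
    simp only [hs, Finset.mem_insert, Finset.mem_image] at hy
    rcases hy with rfl | ⟨j, _, rfl⟩
    · norm_num
    · exact div_pos (hpos j) (by positivity)
  have hεle : ∀ j, ε ≤ x (β j) / (1 + |u j|) := fun j =>
    Finset.min'_le s _ (by simp [hs])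
  -- y := x + ε • w is feasible
  have hyfeas : Feasible A b (x + ε • w) := by
    constructor
    · rw [Matrix.mulVec_add, Matrix.mulVec_smul, hAw, hopt.1.1]
      simp
    · intro k
      by_cases hk : k = i
      · subst hk
        have hx0 : x k = 0 := hsupp k hmem
        have hw1 : w k = 1 := by
          show (if k = k then (1:ℝ) else 0) - ∑ j, (if β j = k then u j else 0) = 1
          have hz : (∑ j, if β j = k then u j else 0) = 0 :=
            Finset.sum_eq_zero fun j _ => if_neg (hmem j)
          rw [hz, if_pos rfl, sub_zero]
        simp only [Pi.add_apply, Pi.smul_apply, hx0, hw1, smul_eq_mul, mul_one, zero_add]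
        exact le_of_lt hεpos
      · by_cases hkb : ∃ j, β j = k
        · obtain ⟨j, rfl⟩ := hkb
          have hwk : w (β j) = -u j := by
            simp only [hw]
            rw [if_neg (by intro h; exact hk h), Finset.sum_eq_single j]
            · simp
            · intro j' _ hj'
              rw [if_neg (fun h => hj' (hβ h))]
            · simp
          simp only [Pi.add_apply, Pi.smul_apply, hwk, smul_eq_mul]
          have h1 : ε * |u j| ≤ x (β j) := by
            calc ε * |u j| ≤ (x (β j) / (1 + |u j|)) * |u j| := by
                  apply mul_le_mul_of_nonneg_right (hεle j) (abs_nonneg _)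
              _ ≤ x (β j) := by
                  rw [div_mul_eq_mul_div, div_le_iff₀ (by positivity)]
                  nlinarith [hpos j, abs_nonneg (u j)]
          have h2 : ε * u j ≤ ε * |u j| :=
            mul_le_mul_of_nonneg_left (le_abs_self _) hεpos.le
          linarith
        · push_neg at hkb
          have hx0 : x k = 0 := hsupp k hkb
          have hw0 : w k = 0 := by
            simp only [hw]
            rw [if_neg hk, Finset.sum_eq_zero, sub_zero]
            intro j _
            rw [if_neg (hkb j)]
          simp [hx0, hw0]
  have := hopt.2 _ hyfeas
  rw [dotProduct_add, dotProduct_smul, hcw, smul_eq_mul] at this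
  have h0 : 0 ≤ ε * reducedCost c A β i := by linarith
  nlinarith [hεpos, hneg]



/-! ### Norm utilities -/

lemma abs_le_l2norm {ι : Type*} [Fintype ι] (x : ι → ℝ) (i : ι) : |x i| ≤ l2norm x := by
  rw [l2norm, ← Real.sqrt_sq_eq_abs]
  apply Real.sqrt_le_sqrt
  exact Finset.single_le_sum (f := fun j => x j ^ 2) (fun j _ => sq_nonneg _) (Finset.mem_univ i)

lemma abs_entry_le_sigmaMax (M : Matrix (Fin m) (Fin m) ℝ) (a b : Fin m) :
    |M a b| ≤ sigmaMax M := by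
  classical
  set x : EuclideanSpace ℝ (Fin m) := (WithLp.equiv 2 _).symm (Pi.single b 1) with hx
  have hxn : ‖x‖ = 1 := by
    have : x = EuclideanSpace.single b (1 : ℝ) := rfl
    rw [this, EuclideanSpace.norm_single]
    norm_num
  have happ : Matrix.toEuclideanCLM (𝕜 := ℝ) M x
      = (WithLp.equiv 2 _).symm (M.mulVec (Pi.single b 1)) := by
    rw [hx]
    exact Matrix.toEuclideanCLM_toLp M _
  have hle := (Matrix.toEuclideanCLM (𝕜 := ℝ) M).le_opNorm x
  rw [hxn, mul_one, happ] at hle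
  refine le_trans ?_ hle
  have hcoord : |M a b| = |((WithLp.equiv 2 _).symm (M.mulVec (Pi.single b 1)) : EuclideanSpace ℝ (Fin m)) a| := by
    simp [Matrix.mulVec_single]
  rw [hcoord, EuclideanSpace.norm_eq, ← Real.sqrt_sq_eq_abs]
  apply Real.sqrt_le_sqrt
  calc _ ≤ ∑ i, ((WithLp.equiv 2 _).symm (M.mulVec (Pi.single b 1)) : EuclideanSpace ℝ (Fin m)) i ^ 2 :=
        Finset.single_le_sum (f := fun i => ((WithLp.equiv 2 _).symm (M.mulVec (Pi.single b 1)) : EuclideanSpace ℝ (Fin m)) i ^ 2)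
          (fun i _ => sq_nonneg _) (Finset.mem_univ a)
    _ = _ := by
        apply Finset.sum_congr rfl
        intro i _
        rw [Real.norm_eq_abs, sq_abs]

/-! ### `enumOf` and `posSupport` facts -/

lemma mem_posSupport {x : Fin n → ℝ} {i : Fin n} : i ∈ posSupport x ↔ 0 < x i := by
  simp [posSupport]

lemma enumOf_inj [NeZero n] {B : Finset (Fin n)} (h : B.card = m) :
    Function.Injective (enumOf (m := m) B) := by
  unfold enumOf
  rw [dif_pos h]
  exact (B.orderEmbOfFin h).injective

lemma mem_iff_enumOf [NeZero n] {B : Finset (Fin n)} (h : B.card = m) {i : Fin n} :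
    i ∈ B ↔ ∃ j, enumOf (m := m) B j = i := by
  unfold enumOf
  rw [dif_pos h]
  constructor
  · intro hi
    have hr := Finset.range_orderEmbOfFin B h
    have : i ∈ Set.range (B.orderEmbOfFin h) := by rw [hr]; exact hi
    exact this
  · rintro ⟨j, rfl⟩
    exact B.orderEmbOfFin_mem h j

/-! ### `basicSol` and the measurable condition -/

/-- The basic solution associated with a basis `B`. -/
noncomputable def basicSol [NeZero n] (B : Finset (Fin n)) (D : Samp n m d) : Fin n → ℝ :=
  fun i => ∑ j, if enumOf (m := m) B j = i
    then (((subCols (AOf D) (enumOf B))⁻¹).mulVec (bOf D)) j else 0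

/-- The measurable condition characterising `B = posSupport (xstar D)` a.e. -/
def cond [NeZero n] (B : Finset (Fin n)) (D : Samp n m d) : Prop :=
  Feasible (AOf D) (bOf D) (basicSol (m := m) B D) ∧
  posSupport (basicSol (m := m) B D) = B ∧
  ∀ i, 0 ≤ reducedCost (cOf D) (AOf D) (enumOf B) i

noncomputable def mlossB [NeZero n] (Θ : Matrix (Fin n) (Fin d) ℝ) (B : Finset (Fin n))
    (D : Samp n m d) : ℝ :=
  ∑ i ∈ Finset.univ \ B,
    max (1 - reducedCost (Θ.mulVec (zOf D)) (AOf D) (enumOf B) i) 0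

/-- Measurable surrogate for `D ↦ mloss Θ D (xstar D)`. -/
noncomputable def Gfun [NeZero n] (Θ : Matrix (Fin n) (Fin d) ℝ) (D : Samp n m d) : ℝ :=
  ∑ B ∈ Finset.powersetCard m (Finset.univ : Finset (Fin n)),
    Set.indicator {D' | cond (m := m) B D'} (mlossB Θ B) D

lemma basicSol_posSupport [NeZero n] {D : Samp n m d} {xs : Fin n → ℝ}
    (hnd : Nondeg D xs) : basicSol (m := m) (posSupport xs) D = xs := by
  set B := posSupport xs with hB
  have hcard : B.card = m := hnd.2.2.2
  set β := enumOf (m := m) B with hβ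
  have hinj : Function.Injective β := enumOf_inj hcard
  have hdet : IsUnit (subCols (AOf D) β).det := hnd.2.2.1 β hinj
  have hfeas := hnd.1.1
  have hzero : ∀ i, i ∉ B → xs i = 0 := by
    intro i hi
    have h1 : ¬ 0 < xs i := by rwa [← mem_posSupport (x := xs), ← hB]
    exact le_antisymm (not_lt.1 h1) (hfeas.2 i)
  have hkey : (subCols (AOf D) β).mulVec (xs ∘ β) = bOf D := by
    rw [← hfeas.1]
    funext r
    have hBim : B = Finset.image β Finset.univ := by
      apply Finset.eq_of_subset_of_card_le
      · intro i hi
        obtain ⟨j, rfl⟩ := (mem_iff_enumOf hcard).1 hi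
        exact Finset.mem_image_of_mem _ (Finset.mem_univ j)
      · rw [Finset.card_image_of_injective _ hinj, Finset.card_univ, Fintype.card_fin, hcard]
    have hsplit : ∑ i, AOf D r i * xs i = ∑ i ∈ B, AOf D r i * xs i := by
      rw [← Finset.sum_subset (Finset.subset_univ B)]
      intro i _ hi
      rw [hzero i hi, mul_zero]
    show ∑ j, subCols (AOf D) β r j * (xs ∘ β) j = ∑ i, AOf D r i * xs i
    rw [hsplit, hBim, Finset.sum_image (fun a _ b _ hab => hinj hab)]
    rfl
  have hxβ : xs ∘ β = ((subCols (AOf D) β)⁻¹).mulVec (bOf D) := by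
    rw [← hkey, Matrix.mulVec_mulVec, Matrix.nonsing_inv_mul _ hdet, Matrix.one_mulVec]
  funext i
  show (∑ j, if β j = i then (((subCols (AOf D) β)⁻¹).mulVec (bOf D)) j else 0) = xs i
  rw [← hxβ]
  by_cases hi : i ∈ B
  · obtain ⟨j0, rfl⟩ := (mem_iff_enumOf hcard).1 hi
    rw [Finset.sum_eq_single j0]
    · rw [← hβ, if_pos rfl]
      rfl
    · intro j' _ hj'
      exact if_neg fun h => hj' (hinj h)
    · simp
  · rw [Finset.sum_eq_zero, hzero i hi]
    intro j _
    refine if_neg fun h => hi ?_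
    rw [← h]
    exact (mem_iff_enumOf hcard).2 ⟨j, rfl⟩

lemma basicSol_supported [NeZero n] {B : Finset (Fin n)} (D : Samp n m d) {i : Fin n}
    (h : ∀ j, enumOf (m := m) B j ≠ i) : basicSol (m := m) B D i = 0 :=
  Finset.sum_eq_zero fun j _ => if_neg (h j)

lemma cond_posSupport [NeZero n] {D : Samp n m d} {xs : Fin n → ℝ}
    (hnd : Nondeg D xs) : cond (m := m) (posSupport xs) D := by
  have hbs := basicSol_posSupport (m := m) hnd
  have hcard : (posSupport xs).card = m := hnd.2.2.2
  have hinj := enumOf_inj (n := n) hcard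
  have hdet := hnd.2.2.1 _ hinj
  refine ⟨by rw [hbs]; exact hnd.1.1, by rw [hbs], ?_⟩
  apply reducedCost_nonneg_of_optimal hdet hinj hnd.1
  · intro i hi
    have hiB : i ∉ posSupport xs := fun hmem => by
      obtain ⟨j, hj⟩ := (mem_iff_enumOf hcard).1 hmem
      exact hi j hj
    exact le_antisymm (not_lt.1 fun h => hiB (mem_posSupport.2 h)) (hnd.1.1.2 i)
  · intro j
    exact mem_posSupport.1 ((mem_iff_enumOf hcard).2 ⟨j, rfl⟩)

lemma eq_posSupport_of_cond [NeZero n] {D : Samp n m d} {xs : Fin n → ℝ}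
    (hnd : Nondeg D xs) {B : Finset (Fin n)} (hB : B.card = m)
    (hc : cond (m := m) B D) : B = posSupport xs := by
  have hinj := enumOf_inj (n := n) hB
  have hdet := hnd.2.2.1 _ hinj
  have hopt : IsOptimal (cOf D) (AOf D) (bOf D) (basicSol (m := m) B D) := by
    apply optimal_of_reducedCost_nonneg hdet hc.1
    · intro i hi
      exact basicSol_supported D hi
    · exact hc.2.2
  have := hnd.2.1 _ hopt
  rw [← hc.2.1, this]

lemma Gfun_eq [NeZero n] {D : Samp n m d} {xs : Fin n → ℝ}
    (hnd : Nondeg D xs) (Θ : Matrix (Fin n) (Fin d) ℝ) :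
    Gfun (m := m) Θ D = mloss Θ D xs := by
  have hcard : (posSupport xs).card = m := hnd.2.2.2
  rw [Gfun, Finset.sum_eq_single_of_mem (posSupport xs)]
  · have hmem : D ∈ {D' | cond (m := m) (posSupport xs) D'} := cond_posSupport hnd
    rw [Set.indicator_of_mem hmem]
    rfl
  · rw [Finset.mem_powersetCard]
    exact ⟨Finset.subset_univ _, hcard⟩
  · intro B hBm hne
    rw [Finset.mem_powersetCard] at hBm
    apply Set.indicator_of_notMem
    intro hc
    exact hne (eq_posSupport_of_cond hnd hBm.2 hc)


/-! ### Measurability -/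

lemma measurable_AOf (i : Fin m) (j : Fin n) :
    Measurable fun D : Samp n m d => AOf D i j :=
  (measurable_pi_apply j).comp ((measurable_pi_apply i).comp (measurable_fst.comp measurable_snd))

lemma measurable_bOf (i : Fin m) : Measurable fun D : Samp n m d => bOf D i :=
  (measurable_pi_apply i).comp (measurable_fst.comp (measurable_snd.comp measurable_snd))

lemma measurable_cOf (i : Fin n) : Measurable fun D : Samp n m d => cOf D i :=
  (measurable_pi_apply i).comp measurable_fst

lemma measurable_zOf (j : Fin d) : Measurable fun D : Samp n m d => zOf D j :=
  (measurable_pi_apply j).comp (measurable_snd.comp (measurable_snd.comp measurable_snd))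

lemma measurable_matrix_det {α : Type*} [MeasurableSpace α] {k : ℕ}
    {M : α → Matrix (Fin k) (Fin k) ℝ} (h : ∀ i j, Measurable fun a => M a i j) :
    Measurable fun a => (M a).det := by
  simp_rw [Matrix.det_apply, Units.smul_def, zsmul_eq_mul]
  exact Finset.measurable_sum _ fun σ _ =>
    (Finset.measurable_prod _ fun i _ => h (σ i) i).const_mul _

lemma measurable_matrix_inv_entry {α : Type*} [MeasurableSpace α] {k : ℕ}
    {M : α → Matrix (Fin k) (Fin k) ℝ} (h : ∀ i j, Measurable fun a => M a i j)
    (i j : Fin k) : Measurable fun a => (M a)⁻¹ i j := by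
  simp_rw [Matrix.inv_def, Matrix.smul_apply, Ring.inverse_eq_inv', smul_eq_mul]
  refine Measurable.mul ((measurable_matrix_det h).inv) ?_
  simp_rw [Matrix.adjugate_apply]
  apply measurable_matrix_det
  intro a b
  simp_rw [Matrix.updateRow_apply]
  by_cases hab : a = j
  · simp [hab]
  · simpa [hab] using h a b

lemma measurable_subCols_inv_entry (β : Fin m → Fin n) (i j : Fin m) :
    Measurable fun D : Samp n m d => (subCols (AOf D) β)⁻¹ i j :=
  measurable_matrix_inv_entry (fun a b => measurable_AOf a (β b)) i j

lemma measurable_reducedCost {c : Samp n m d → Fin n → ℝ}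
    (hc : ∀ i, Measurable fun D => c D i) (β : Fin m → Fin n) (i : Fin n) :
    Measurable fun D => reducedCost (c D) (AOf D) β i := by
  unfold reducedCost
  simp only [Pi.sub_apply, Matrix.mulVec, dotProduct, Matrix.transpose_apply,
    Function.comp]
  exact (hc i).sub (Finset.measurable_sum _ fun a _ => ((measurable_AOf a i)).mul
    (Finset.measurable_sum _ fun b _ => (measurable_subCols_inv_entry β b a).mul (hc (β b))))

lemma measurable_chat (Θ : Matrix (Fin n) (Fin d) ℝ) (i : Fin n) :
    Measurable fun D : Samp n m d => Θ.mulVec (zOf D) i := by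
  simp only [Matrix.mulVec, dotProduct]
  exact Finset.measurable_sum _ fun j _ => (measurable_zOf j).const_mul _

lemma measurable_basicSol [NeZero n] (B : Finset (Fin n)) (i : Fin n) :
    Measurable fun D : Samp n m d => basicSol (m := m) B D i := by
  unfold basicSol
  apply Finset.measurable_sum
  intro j _
  by_cases hj : enumOf (m := m) B j = i
  · simp only [hj, if_pos rfl]
    simp only [Matrix.mulVec, dotProduct]
    exact Finset.measurable_sum _ fun b _ =>
      (measurable_subCols_inv_entry _ j b).mul (measurable_bOf b)
  · simp only [if_neg hj]
    exact measurable_const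

lemma measurableSet_cond [NeZero n] (B : Finset (Fin n)) :
    MeasurableSet {D : Samp n m d | cond (m := m) B D} := by
  have h1 : {D : Samp n m d | cond (m := m) B D} =
      ((⋂ r, {D | ((AOf D).mulVec (basicSol (m := m) B D)) r = bOf D r}) ∩
       (⋂ i, {D | 0 ≤ basicSol (m := m) B D i})) ∩
      ((⋂ i, {D | 0 < basicSol (m := m) B D i ↔ i ∈ B}) ∩
       (⋂ i, {D | 0 ≤ reducedCost (cOf D) (AOf D) (enumOf B) i})) := by
    ext D
    simp only [Set.mem_inter_iff, Set.mem_iInter, Set.mem_setOf_eq, cond, Feasible]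
    constructor
    · rintro ⟨⟨hfe, hge⟩, hpos, hrc⟩
      refine ⟨⟨fun r => by rw [hfe], hge⟩, fun i => ?_, hrc⟩
      rw [← mem_posSupport, hpos]
    · rintro ⟨⟨hfe, hge⟩, hps, hrc⟩
      refine ⟨⟨funext hfe, hge⟩, ?_, hrc⟩
      ext i
      rw [mem_posSupport, hps]
  rw [h1]
  have hmv : ∀ r : Fin m, Measurable fun D : Samp n m d =>
      ((AOf D).mulVec (basicSol (m := m) B D)) r := by
    intro r
    simp only [Matrix.mulVec, dotProduct]
    exact Finset.measurable_sum _ fun i _ =>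
      (measurable_AOf r i).mul (measurable_basicSol B i)
  refine MeasurableSet.inter (MeasurableSet.inter ?_ ?_) (MeasurableSet.inter ?_ ?_)
  · exact MeasurableSet.iInter fun r => measurableSet_eq_fun (hmv r) (measurable_bOf r)
  · exact MeasurableSet.iInter fun i =>
      measurableSet_le measurable_const (measurable_basicSol B i)
  · refine MeasurableSet.iInter fun i => ?_
    by_cases hi : i ∈ B
    · have : {D : Samp n m d | 0 < basicSol (m := m) B D i ↔ i ∈ B} =
          {D | 0 < basicSol (m := m) B D i} := by
        ext D; simp [hi]
      rw [this]
      exact measurableSet_lt measurable_const (measurable_basicSol B i)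
    · have : {D : Samp n m d | 0 < basicSol (m := m) B D i ↔ i ∈ B} =
          {D | 0 < basicSol (m := m) B D i}ᶜ := by
        ext D; simp [hi]
      rw [this]
      exact (measurableSet_lt measurable_const (measurable_basicSol B i)).compl
  · exact MeasurableSet.iInter fun i => measurableSet_le measurable_const
      (measurable_reducedCost measurable_cOf _ i)

lemma measurable_mlossB [NeZero n] (Θ : Matrix (Fin n) (Fin d) ℝ) (B : Finset (Fin n)) :
    Measurable (mlossB (m := m) Θ B) := by
  unfold mlossB
  exact Finset.measurable_sum _ fun i _ =>
    ((measurable_const.sub (measurable_reducedCost (measurable_chat Θ) _ i)).max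
      measurable_const)

lemma measurable_Gfun [NeZero n] (Θ : Matrix (Fin n) (Fin d) ℝ) :
    Measurable (Gfun (m := m) (d := d) Θ) := by
  unfold Gfun
  exact Finset.measurable_sum _ fun B _ =>
    (measurable_mlossB Θ B).indicator (measurableSet_cond B)


/-! ### Pointwise bound and uniform bound -/

lemma neg_mul_le_margin {r x : ℝ} (h0 : 0 ≤ x) (h1 : x ≤ 1) :
    -(r * x) ≤ max (1 - r) 0 := by
  rcases le_or_gt 0 r with hr | hr
  · have : 0 ≤ r * x := mul_nonneg hr h0
    calc -(r * x) ≤ 0 := by linarith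
      _ ≤ max (1 - r) 0 := le_max_right _ _
  · have : -(r * x) ≤ -r := by nlinarith
    calc -(r * x) ≤ -r := this
      _ ≤ 1 - r := by linarith
      _ ≤ max (1 - r) 0 := le_max_left _ _

lemma pointwise_bound [NeZero n] {σb : ℝ} {D : Samp n m d} {xs xh : Fin n → ℝ}
    (hnd : Nondeg D xs) (hbd : BoundedD σb D xs)
    (Θ : Matrix (Fin n) (Fin d) ℝ)
    (hxh : IsOptimal (Θ.mulVec (zOf D)) (AOf D) (bOf D) xh) :
    Θ.mulVec (zOf D) ⬝ᵥ xs - Θ.mulVec (zOf D) ⬝ᵥ xh ≤ mloss Θ D xs := by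
  set ch := Θ.mulVec (zOf D) with hch
  set B := posSupport xs with hB
  have hcard : B.card = m := hnd.2.2.2
  set β := enumOf (m := m) B with hβ
  have hinj : Function.Injective β := enumOf_inj hcard
  have hdet : IsUnit (subCols (AOf D) β).det := hnd.2.2.1 β hinj
  set r := reducedCost ch (AOf D) β with hr
  have hid : ch ⬝ᵥ xs - ch ⬝ᵥ xh = r ⬝ᵥ xs - r ⬝ᵥ xh := by
    rw [hr, reducedCost_dot ch (AOf D) β hnd.1.1.1, reducedCost_dot ch (AOf D) β hxh.1.1]
    ring
  have hrxs : r ⬝ᵥ xs = 0 := by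
    apply Finset.sum_eq_zero
    intro i _
    by_cases hmem : ∃ j, β j = i
    · obtain ⟨j, rfl⟩ := hmem
      rw [hr, reducedCost_basis hdet, zero_mul]
    · push_neg at hmem
      have hiB : i ∉ B := fun hi => by
        obtain ⟨j, hj⟩ := (mem_iff_enumOf hcard).1 hi
        exact hmem j hj
      have : xs i = 0 := le_antisymm
        (not_lt.1 fun h => hiB (mem_posSupport.2 h)) (hnd.1.1.2 i)
      rw [this, mul_zero]
  have hsum : r ⬝ᵥ xh = ∑ i ∈ Finset.univ \ B, r i * xh i := by
    have := Finset.sum_sdiff (f := fun i => r i * xh i) (Finset.subset_univ B)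
    have hBzero : ∑ i ∈ B, r i * xh i = 0 := by
      apply Finset.sum_eq_zero
      intro i hi
      obtain ⟨j, rfl⟩ := (mem_iff_enumOf hcard).1 hi
      rw [hr, reducedCost_basis hdet, zero_mul]
    unfold dotProduct
    linarith
  rw [hid, hrxs, zero_sub, hsum, ← Finset.sum_neg_distrib]
  apply Finset.sum_le_sum
  intro i _
  apply neg_mul_le_margin (hxh.1.2 i)
  calc xh i ≤ |xh i| := le_abs_self _
    _ ≤ l2norm xh := abs_le_l2norm xh i
    _ ≤ 1 := hbd.2.2.2.2.2 xh hxh.1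

lemma mloss_nonneg [NeZero n] (Θ : Matrix (Fin n) (Fin d) ℝ) (D : Samp n m d)
    (xs : Fin n → ℝ) : 0 ≤ mloss Θ D xs :=
  Finset.sum_nonneg fun i _ => le_max_right _ _

lemma mloss_le_bound [NeZero n] {σb : ℝ} {D : Samp n m d} {xs : Fin n → ℝ}
    (hnd : Nondeg D xs) (hbd : BoundedD σb D xs) (Θ : Matrix (Fin n) (Fin d) ℝ) :
    |mloss Θ D xs| ≤
      n * (1 + (∑ i, ∑ j, |Θ i j|) + m * (m * (σb * ∑ i, ∑ j, |Θ i j|))) := by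
  set K := ∑ i, ∑ j, |Θ i j| with hK
  have hK0 : 0 ≤ K := Finset.sum_nonneg fun i _ => Finset.sum_nonneg fun j _ => abs_nonneg _
  set ch := Θ.mulVec (zOf D) with hch
  set B := posSupport xs with hB
  set β := enumOf (m := m) B with hβ
  have hσ0 : 0 ≤ σb := le_trans (norm_nonneg _) hbd.1
  have hz : ∀ j, |zOf D j| ≤ 1 := fun j => le_trans (abs_le_l2norm _ j) hbd.2.1
  have hchb : ∀ i, |ch i| ≤ K := by
    intro i
    calc |ch i| = |∑ j, Θ i j * zOf D j| := rfl
      _ ≤ ∑ j, |Θ i j * zOf D j| := Finset.abs_sum_le_sum_abs _ _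
      _ ≤ ∑ j, |Θ i j| := by
          apply Finset.sum_le_sum
          intro j _
          rw [abs_mul]
          calc |Θ i j| * |zOf D j| ≤ |Θ i j| * 1 :=
                mul_le_mul_of_nonneg_left (hz j) (abs_nonneg _)
            _ = |Θ i j| := mul_one _
      _ ≤ K := Finset.single_le_sum (f := fun i => ∑ j, |Θ i j|)
          (fun i _ => Finset.sum_nonneg fun j _ => abs_nonneg _) (Finset.mem_univ i)
  have hMinv : ∀ a b, |(subCols (AOf D) β)⁻¹ a b| ≤ σb := fun a b =>
    le_trans (abs_entry_le_sigmaMax _ a b) hbd.1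
  set y := (((subCols (AOf D) β)⁻¹)ᵀ).mulVec (ch ∘ β) with hy
  have hyb : ∀ a, |y a| ≤ m * (σb * K) := by
    intro a
    calc |y a| = |∑ b, (subCols (AOf D) β)⁻¹ b a * ch (β b)| := rfl
      _ ≤ ∑ b, |(subCols (AOf D) β)⁻¹ b a * ch (β b)| := Finset.abs_sum_le_sum_abs _ _
      _ ≤ ∑ _b : Fin m, σb * K := by
          apply Finset.sum_le_sum
          intro b _
          rw [abs_mul]
          exact mul_le_mul (hMinv b a) (hchb (β b)) (abs_nonneg _) hσ0
      _ = m * (σb * K) := by rw [Finset.sum_const, Finset.card_univ, Fintype.card_fin,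
            nsmul_eq_mul]
  have hrb : ∀ i, |reducedCost ch (AOf D) β i| ≤ K + m * (m * (σb * K)) := by
    intro i
    have hA1 : ∀ a, |AOf D a i| ≤ 1 := fun a => hbd.2.2.1 a i
    calc |reducedCost ch (AOf D) β i| = |ch i - ∑ a, AOf D a i * y a| := rfl
      _ ≤ |ch i| + |∑ a, AOf D a i * y a| := abs_sub _ _
      _ ≤ K + ∑ a, |AOf D a i * y a| := by
          gcongr
          · exact hchb i
          · exact Finset.abs_sum_le_sum_abs _ _
      _ ≤ K + ∑ _a : Fin m, m * (σb * K) := by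
          gcongr with a
          rw [abs_mul]
          calc |AOf D a i| * |y a| ≤ 1 * (m * (σb * K)) :=
                mul_le_mul (hA1 a) (hyb a) (abs_nonneg _) zero_le_one
            _ = m * (σb * K) := one_mul _
      _ = K + m * (m * (σb * K)) := by rw [Finset.sum_const, Finset.card_univ,
            Fintype.card_fin, nsmul_eq_mul]
  rw [abs_of_nonneg (mloss_nonneg Θ D xs)]
  have hbound : ∀ i ∈ Finset.univ \ B,
      max (1 - reducedCost ch (AOf D) β i) 0 ≤ 1 + (K + m * (m * (σb * K))) := by
    intro i _
    apply max_le
    · have := hrb i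
      have := neg_abs_le (reducedCost ch (AOf D) β i)
      linarith
    · positivity
  calc mloss Θ D xs ≤ ∑ _i ∈ Finset.univ \ B, (1 + (K + m * (m * (σb * K)))) :=
        Finset.sum_le_sum hbound
    _ = (Finset.univ \ B).card * (1 + (K + m * (m * (σb * K)))) := by
        rw [Finset.sum_const, nsmul_eq_mul]
    _ ≤ n * (1 + (K + m * (m * (σb * K)))) := by
        have hc : ((Finset.univ \ B).card : ℝ) ≤ n := by
          have := Finset.card_le_univ (Finset.univ \ B)
          rw [Fintype.card_fin] at this
          exact_mod_cast this
        have hpos : (0:ℝ) ≤ 1 + (K + m * (m * (σb * K))) := by positivity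
        exact mul_le_mul_of_nonneg_right hc hpos
    _ = n * (1 + K + m * (m * (σb * K))) := by ring

/-- the suboptimality loss is bounded by the expected
    margin-violation loss: l_sub(Θ) ≤ E[l(D;Θ)]. -/
theorem suboptimality_le_expected_margin_loss
    [NeZero n]
    (P : Measure (Samp n m d)) [IsProbabilityMeasure P]
    (xstar : Samp n m d → Fin n → ℝ)
    (σb : ℝ)
    (h_nondeg : ∀ᵐ D ∂P, Nondeg D (xstar D))
    (h_bdd : ∀ᵐ D ∂P, BoundedD σb D (xstar D))
    (Θ : Matrix (Fin n) (Fin d) ℝ)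
    (xhat : Samp n m d → Fin n → ℝ)
    (h_xhat : ∀ᵐ D ∂P, IsOptimal (Θ.mulVec (zOf D)) (AOf D) (bOf D) (xhat D)) :
    (∫ D, ((Θ.mulVec (zOf D)) ⬝ᵥ xstar D - (Θ.mulVec (zOf D)) ⬝ᵥ xhat D) ∂P) ≤
      ∫ D, mloss Θ D (xstar D) ∂P := by
  classical
  set f : Samp n m d → ℝ :=
    fun D => Θ.mulVec (zOf D) ⬝ᵥ xstar D - Θ.mulVec (zOf D) ⬝ᵥ xhat D with hf
  set C : ℝ := n * (1 + (∑ i, ∑ j, |Θ i j|) + m * (m * (σb * ∑ i, ∑ j, |Θ i j|))) with hC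
  have hae : ∀ᵐ D ∂P, f D ≤ Gfun (m := m) Θ D ∧ 0 ≤ f D ∧
      mloss Θ D (xstar D) = Gfun (m := m) Θ D ∧ |Gfun (m := m) Θ D| ≤ C := by
    filter_upwards [h_nondeg, h_bdd, h_xhat] with D hnd hbd hxh
    have hGeq : Gfun (m := m) Θ D = mloss Θ D (xstar D) := Gfun_eq hnd Θ
    refine ⟨?_, ?_, hGeq.symm, ?_⟩
    · rw [hGeq]
      exact pointwise_bound hnd hbd Θ hxh
    · have hle : Θ.mulVec (zOf D) ⬝ᵥ xhat D ≤ Θ.mulVec (zOf D) ⬝ᵥ xstar D :=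
        hxh.2 _ hnd.1.1
      simp only [hf]
      linarith
    · rw [hGeq]
      exact mloss_le_bound hnd hbd Θ
  have hGint : Integrable (Gfun (m := m) (d := d) Θ) P := by
    refine ⟨(measurable_Gfun Θ).aestronglyMeasurable, ?_⟩
    apply MeasureTheory.HasFiniteIntegral.of_bounded (C := C)
    filter_upwards [hae] with D hD
    rw [Real.norm_eq_abs]
    exact hD.2.2.2
  have h1 : ∫ D, f D ∂P ≤ ∫ D, Gfun (m := m) Θ D ∂P :=
    integral_mono_of_nonneg (hae.mono fun D hD => hD.2.1) hGint (hae.mono fun D hD => hD.1)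
  have h2 : ∫ D, Gfun (m := m) Θ D ∂P = ∫ D, mloss Θ D (xstar D) ∂P :=
    integral_congr_ae (hae.mono fun D hD => hD.2.2.1.symm)
  exact h1.trans_eq h2

end MOMPaper
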